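/- Let F be a finite field with q elements, q odd, and let r ≥ 2. Then (q−1)² divides the number of r-tuples (A₁, …, A_r) ∈ Ũ₃(F)^r satisfying A₁² A₂² ⋯ A_r² = 1. -/

import Mathlib

open Matrix

/-- `3 × 3` matrices over `F`. -/
abbrev M3 (F : Type*) := Matrix (Fin 3) (Fin 3) F

/-- Membership in the group `Ũ₃(F)` of upper triangular `3 × 3` matrices
`[[a,b,c],[0,d,e],[0,0,1]]` with `a, d ≠ 0` and `(3,3)`-entry equal to `1`. -/
def inU3 {F : Type*} [Field F] (A : M3 F) : Prop :=
  A 0 0 ≠ 0 ∧ A 1 1 ≠ 0 ∧ A 2 2 = 1 ∧ A 1 0 = 0 ∧ A 2 0 = 0 ∧ A 2 1 = 0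

theorem nat_card_sigma' {ι : Type*} [Fintype ι] (f : ι → Type*) [∀ i, Finite (f i)] :
    Nat.card (Σ i, f i) = ∑ i, Nat.card (f i) := by
  letI := fun i => Fintype.ofFinite (f i)
  simp [Nat.card_eq_fintype_card, Fintype.card_sigma]

theorem card_dvd_of_free_action {K X : Type*} [Group K] [Finite X]
    (e : K → X → X) (h1 : ∀ x, e 1 x = x) (hc : ∀ k k' x, e k (e k' x) = e (k * k') x)
    (hfree : ∀ k x, e k x = x → k = 1) : Nat.card K ∣ Nat.card X := by
  letI : SMul K X := ⟨e⟩
  letI : MulAction K X := { one_smul := h1, mul_smul := fun k k' x => (hc k k' x).symm }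
  classical
  rcases isEmpty_or_nonempty X with hX | hX
  · letI : Fintype X := Fintype.ofFinite X
    simp [Nat.card_eq_fintype_card, Fintype.card_eq_zero]
  · have hK : Finite K := by
      obtain ⟨x⟩ := hX
      exact Finite.of_injective (fun k => e k x) (fun k k' h => by
        simp only at h
        have h2 : e (k'⁻¹ * k) x = x := by
          rw [← hc, h, hc, inv_mul_cancel, h1]
        exact (inv_mul_eq_one.mp (hfree _ _ h2)).symm)
    have horb : ∀ x : X, Nat.card (MulAction.orbit K x) = Nat.card K := by
      intro x
      have hstab : MulAction.stabilizer K x = ⊥ := by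
        ext k
        simp only [MulAction.mem_stabilizer_iff, Subgroup.mem_bot]
        exact ⟨fun h => hfree k x h, fun h => by rw [h]; exact h1 x⟩
      rw [Nat.card_congr (MulAction.orbitEquivQuotientStabilizer K x), hstab,
        Nat.card_congr (QuotientGroup.quotientBot (G := K)).toEquiv]
    letI : Fintype (MulAction.orbitRel.Quotient K X) := Fintype.ofFinite _
    rw [Nat.card_congr (MulAction.selfEquivSigmaOrbits K X), nat_card_sigma']
    exact Finset.dvd_sum fun ω _ => by rw [horb]

namespace U3aux
variable {F : Type*} [Field F]

def vec3 (w : Fˣ × Fˣ) : Fin 3 → F := ![(w.1 : F), (w.2 : F), 1]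

lemma vec3_ne_zero (w : Fˣ × Fˣ) (j : Fin 3) : vec3 w j ≠ 0 := by
  fin_cases j <;> simp [vec3]

lemma vec3_mul (w w' : Fˣ × Fˣ) (j : Fin 3) : vec3 (w * w') j = vec3 w j * vec3 w' j := by
  fin_cases j <;> simp [vec3]

lemma vec3_one (j : Fin 3) : vec3 (1 : Fˣ × Fˣ) j = 1 := by
  fin_cases j <;> simp [vec3]

lemma vec3_two (w : Fˣ × Fˣ) : vec3 w 2 = (1 : F) := rfl

def Dm (w : Fˣ × Fˣ) : M3 F := Matrix.diagonal (vec3 w)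

lemma Dm_mul (w w' : Fˣ × Fˣ) : (Dm w : M3 F) * Dm w' = Dm (w * w') := by
  ext j k
  by_cases hjk : j = k
  · subst hjk
    simp [Dm, Matrix.diagonal_mul_diagonal, Matrix.diagonal_apply_eq, vec3_mul]
  · simp [Dm, Matrix.diagonal_mul_diagonal, Matrix.diagonal_apply_ne _ hjk]

lemma Dm_one : (Dm 1 : M3 F) = 1 := by
  ext j k
  by_cases hjk : j = k
  · subst hjk
    simp [Dm, Matrix.diagonal_apply_eq, vec3_one, Matrix.one_apply_eq]
  · simp [Dm, Matrix.diagonal_apply_ne _ hjk, Matrix.one_apply_ne hjk]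

lemma Dm_mul_apply (w : Fˣ × Fˣ) (M : M3 F) (j k : Fin 3) :
    (Dm w * M) j k = vec3 w j * M j k := Matrix.diagonal_mul _ _ _ _

lemma mul_Dm_apply (w : Fˣ × Fˣ) (M : M3 F) (j k : Fin 3) :
    (M * Dm w) j k = M j k * vec3 w k := Matrix.mul_diagonal _ _ _ _

lemma sandwich_apply (w v : Fˣ × Fˣ) (M : M3 F) (j k : Fin 3) :
    (Dm w * M * Dm v) j k = vec3 w j * M j k * vec3 v k := by
  rw [mul_Dm_apply, Dm_mul_apply]

lemma Dm_comm (w : Fˣ × Fˣ) (M : M3 F) (h : ∀ j k, M j k = 0 ∨ vec3 w j = vec3 w k) :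
    (Dm w : M3 F) * M = M * Dm w := by
  ext j k
  rw [Dm_mul_apply, mul_Dm_apply]
  rcases h j k with h0 | he
  · rw [h0, mul_zero, zero_mul]
  · rw [he, mul_comm]

variable {n : ℕ}

/-- the index-dependent central factor -/
def zm (z : (Fˣ × Fˣ) →* (Fˣ × Fˣ)) (p : Fˣ × Fˣ) (i : Fin (n + 2)) : Fˣ × Fˣ :=
  if i = 0 then z p else if i = 1 then (z p)⁻¹ else 1

/-- the action of `p : Fˣ × Fˣ` on tuples of matrices -/
def act (c z : (Fˣ × Fˣ) →* (Fˣ × Fˣ)) (p : Fˣ × Fˣ) (A : Fin (n + 2) → M3 F) :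
    Fin (n + 2) → M3 F :=
  fun i => Dm (c p * zm z p i) * A i * Dm (c p)⁻¹

lemma zm_one (z : (Fˣ × Fˣ) →* (Fˣ × Fˣ)) (i : Fin (n + 2)) : zm z (1 : Fˣ × Fˣ) i = 1 := by
  unfold zm
  split <;> simp

lemma zm_mul (z : (Fˣ × Fˣ) →* (Fˣ × Fˣ)) (p p' : Fˣ × Fˣ) (i : Fin (n + 2)) :
    zm z p i * zm z p' i = zm z (p * p') i := by
  unfold zm
  split_ifs <;> simp [_root_.map_mul, mul_inv, mul_comm]

lemma zm_of_z_eq_one (z : (Fˣ × Fˣ) →* (Fˣ × Fˣ)) (p : Fˣ × Fˣ) (hz : z p = 1)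
    (i : Fin (n + 2)) : zm z p i = 1 := by
  unfold zm
  split_ifs <;> simp [hz]

lemma act_one (c z : (Fˣ × Fˣ) →* (Fˣ × Fˣ)) (A : Fin (n + 2) → M3 F) :
    act c z 1 A = A := by
  funext i
  simp [act, zm_one, _root_.map_one, Dm_one]

lemma act_mul (c z : (Fˣ × Fˣ) →* (Fˣ × Fˣ)) (p p' : Fˣ × Fˣ) (A : Fin (n + 2) → M3 F) :
    act c z p (act c z p' A) = act c z (p * p') A := by
  funext i
  show Dm (c p * zm z p i) * (Dm (c p' * zm z p' i) * A i * Dm (c p')⁻¹) * Dm (c p)⁻¹ = _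
  have h1 : (Dm ((c p) * zm z p i) : M3 F) * Dm (c p' * zm z p' i)
      = Dm (c (p * p') * zm z (p * p') i) := by
    rw [Dm_mul]
    exact congrArg Dm (by
      rw [_root_.map_mul, ← zm_mul]
      exact mul_mul_mul_comm (c p) (zm z p i) (c p') (zm z p' i))
  have h2 : (Dm (c p')⁻¹ : M3 F) * Dm (c p)⁻¹ = Dm (c (p * p'))⁻¹ := by
    rw [Dm_mul]
    exact congrArg Dm (by rw [_root_.map_mul, _root_.mul_inv_rev])
  calc Dm (c p * zm z p i) * (Dm (c p' * zm z p' i) * A i * Dm (c p')⁻¹) * Dm (c p)⁻¹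
      = (Dm (c p * zm z p i) * Dm (c p' * zm z p' i)) * A i
        * ((Dm (c p')⁻¹ : M3 F) * Dm (c p)⁻¹) := by
        simp only [mul_assoc]
    _ = _ := by rw [h1, h2, act]

lemma act_apply (c z : (Fˣ × Fˣ) →* (Fˣ × Fˣ)) (p : Fˣ × Fˣ) (A : Fin (n + 2) → M3 F)
    (i : Fin (n + 2)) (j k : Fin 3) :
    act c z p A i j k = vec3 (c p * zm z p i) j * A i j k * vec3 (c p)⁻¹ k :=
  sandwich_apply _ _ _ _ _

lemma act_entry_eq_zero_iff (c z : (Fˣ × Fˣ) →* (Fˣ × Fˣ)) (p : Fˣ × Fˣ)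
    (A : Fin (n + 2) → M3 F) (i : Fin (n + 2)) (j k : Fin 3) :
    act c z p A i j k = 0 ↔ A i j k = 0 := by
  rw [act_apply]
  constructor
  · intro h
    rcases mul_eq_zero.mp h with h' | h'
    · rcases mul_eq_zero.mp h' with h'' | h''
      · exact absurd h'' (vec3_ne_zero _ _)
      · exact h''
    · exact absurd h' (vec3_ne_zero _ _)
  · intro h
    rw [h, mul_zero, zero_mul]

lemma inU3_act (c z : (Fˣ × Fˣ) →* (Fˣ × Fˣ)) (p : Fˣ × Fˣ) (A : Fin (n + 2) → M3 F)
    (h : ∀ i, inU3 (A i)) (i : Fin (n + 2)) : inU3 (act c z p A i) := by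
  obtain ⟨h00, h11, h22, h10, h20, h21⟩ := h i
  refine ⟨?_, ?_, ?_, ?_, ?_, ?_⟩ <;> rw [act_apply]
  · exact mul_ne_zero (mul_ne_zero (vec3_ne_zero _ _) h00) (vec3_ne_zero _ _)
  · exact mul_ne_zero (mul_ne_zero (vec3_ne_zero _ _) h11) (vec3_ne_zero _ _)
  · rw [vec3_two, vec3_two, h22, mul_one, one_mul]
  · rw [h10, mul_zero, zero_mul]
  · rw [h20, mul_zero, zero_mul]
  · rw [h21, mul_zero, zero_mul]


lemma conj_prod (C C' : M3 F) (h : C' * C = 1) (h2 : C * C' = 1) (l : List (M3 F)) :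
    (l.map fun X => C * X * C').prod = C * l.prod * C' := by
  induction l with
  | nil =>
      simp only [List.map_nil, List.prod_nil, mul_one]
      exact h2.symm
  | cons a t ih =>
      rw [List.map_cons, List.prod_cons, List.prod_cons, ih]
      calc (C * a * C') * (C * t.prod * C')
          = C * (a * ((C' * C) * (t.prod * C'))) := by simp only [mul_assoc]
        _ = C * (a * t.prod) * C' := by rw [h]; simp only [one_mul, mul_assoc]

lemma act_prod (c z : (Fˣ × Fˣ) →* (Fˣ × Fˣ)) (p : Fˣ × Fˣ) (A : Fin (n + 2) → M3 F)
    (hZ : ∀ i, (Dm (z p) : M3 F) * A i = A i * Dm (z p))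
    (hprod : (List.ofFn fun i => (A i) ^ 2).prod = 1) :
    (List.ofFn fun i => (act c z p A i) ^ 2).prod = 1 := by
  set Z : M3 F := Dm (z p) with hZdef
  set W : M3 F := Dm (z p)⁻¹ with hWdef
  set C : M3 F := Dm (c p) with hCdef
  set C' : M3 F := Dm (c p)⁻¹ with hC'def
  have hCC' : C * C' = 1 := by rw [hCdef, hC'def, Dm_mul, mul_inv_cancel, Dm_one]
  have hC'C : C' * C = 1 := by rw [hCdef, hC'def, Dm_mul, inv_mul_cancel, Dm_one]
  have hZW : Z * W = 1 := by rw [hZdef, hWdef, Dm_mul, mul_inv_cancel, Dm_one]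
  have hWZ : W * Z = 1 := by rw [hZdef, hWdef, Dm_mul, inv_mul_cancel, Dm_one]
  have hW : ∀ i, W * A i = A i * W := by
    intro i
    calc W * A i = W * A i * (Z * W) := by rw [hZW, mul_one]
      _ = W * (A i * Z) * W := by simp only [mul_assoc]
      _ = W * (Z * A i) * W := by rw [← hZ i]
      _ = (W * Z) * (A i * W) := by simp only [mul_assoc]
      _ = A i * W := by rw [hWZ, one_mul]
  have hact : ∀ i, act c z p A i = C * (Dm (zm z p i) * A i) * C' := by
    intro i
    rw [act, ← Dm_mul]
    simp only [mul_assoc]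
    rfl
  have hsq : ∀ Y : M3 F, (C * Y * C') ^ 2 = C * Y ^ 2 * C' := by
    intro Y
    rw [sq, sq]
    calc (C * Y * C') * (C * Y * C')
        = C * (Y * ((C' * C) * (Y * C'))) := by simp only [mul_assoc]
      _ = C * (Y * Y) * C' := by rw [hC'C]; simp only [one_mul, mul_assoc]
  have hlist : (List.ofFn fun i => (act c z p A i) ^ 2)
      = (List.ofFn fun i => (Dm (zm z p i) * A i) ^ 2).map (fun X => C * X * C') := by
    rw [List.map_ofFn]
    congr 1
    funext i
    rw [Function.comp_apply, hact i, hsq]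
  rw [hlist, conj_prod C C' hC'C hCC']
  have hinner : (List.ofFn fun i => ((Dm (zm z p i) : M3 F) * A i) ^ 2).prod = 1 := by
    have hzm0 : zm z p (0 : Fin (n + 2)) = z p := by simp [zm]
    have h10 : (1 : Fin (n + 2)) ≠ 0 := by simp [Fin.ext_iff]
    have hzm1 : zm z p (1 : Fin (n + 2)) = (z p)⁻¹ := by simp [zm, h10]
    have hzm2 : ∀ i : Fin n, zm z p i.succ.succ = 1 := by
      intro i
      have h0 : i.succ.succ ≠ (0 : Fin (n + 2)) := Fin.succ_ne_zero _
      have h1 : i.succ.succ ≠ (1 : Fin (n + 2)) := by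
        intro h
        apply Fin.succ_ne_zero i
        apply Fin.succ_injective
        rw [h, Fin.succ_zero_eq_one]
      simp [zm, h0, h1]
    rw [List.ofFn_succ, List.ofFn_succ, List.prod_cons, List.prod_cons]
    rw [List.ofFn_succ, List.ofFn_succ, List.prod_cons, List.prod_cons] at hprod
    simp only [Fin.succ_zero_eq_one] at *
    rw [hzm0, hzm1]
    have htail : (List.ofFn fun i : Fin n => ((Dm (zm z p i.succ.succ) : M3 F) * A i.succ.succ) ^ 2)
        = List.ofFn fun i : Fin n => (A i.succ.succ) ^ 2 := by
      congr 1
      funext i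
      rw [hzm2 i, Dm_one, one_mul]
    rw [htail]
    have e0 : ((Z : M3 F) * A 0) ^ 2 = Z ^ 2 * (A 0) ^ 2 := by
      rw [sq, sq, sq]
      calc (Z * A 0) * (Z * A 0) = Z * ((A 0 * Z) * A 0) := by simp only [mul_assoc]
        _ = Z * ((Z * A 0) * A 0) := by rw [← hZ 0]
        _ = (Z * Z) * (A 0 * A 0) := by simp only [mul_assoc]
    have e1 : ((W : M3 F) * A 1) ^ 2 = W ^ 2 * (A 1) ^ 2 := by
      rw [sq, sq, sq]
      calc (W * A 1) * (W * A 1) = W * ((A 1 * W) * A 1) := by simp only [mul_assoc]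
        _ = W * ((W * A 1) * A 1) := by rw [← hW 1]
        _ = (W * W) * (A 1 * A 1) := by simp only [mul_assoc]
    rw [e0, e1]
    have hcomm : (A 0) ^ 2 * W ^ 2 = W ^ 2 * (A 0) ^ 2 := by
      have : Commute W (A 0) := hW 0
      exact (this.pow_pow 2 2).symm
    have hZW2 : (Z : M3 F) ^ 2 * W ^ 2 = 1 := by
      rw [sq, sq]
      calc Z * Z * (W * W) = Z * ((Z * W) * W) := by simp only [mul_assoc]
        _ = 1 := by rw [hZW, one_mul]; exact hZW
    calc Z ^ 2 * (A 0) ^ 2 * (W ^ 2 * (A 1) ^ 2 * (List.ofFn fun i : Fin n => (A i.succ.succ) ^ 2).prod)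
        = Z ^ 2 * (((A 0) ^ 2 * W ^ 2) * ((A 1) ^ 2 * (List.ofFn fun i : Fin n => (A i.succ.succ) ^ 2).prod)) := by
          simp only [mul_assoc]
      _ = Z ^ 2 * ((W ^ 2 * (A 0) ^ 2) * ((A 1) ^ 2 * (List.ofFn fun i : Fin n => (A i.succ.succ) ^ 2).prod)) := by
          rw [hcomm]
      _ = (Z ^ 2 * W ^ 2) * ((A 0) ^ 2 * ((A 1) ^ 2 * (List.ofFn fun i : Fin n => (A i.succ.succ) ^ 2).prod)) := by
          simp only [mul_assoc]
      _ = 1 := by rw [hZW2, one_mul, hprod]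
  rw [hinner, mul_one, hCC']


def sol (A : Fin (n + 2) → M3 F) : Prop :=
  (∀ i, inU3 (A i)) ∧ (List.ofFn fun i => (A i) ^ 2).prod = 1

theorem piece_dvd [Finite F] (c z : (Fˣ × Fˣ) →* (Fˣ × Fˣ)) (P : (Fin (n + 2) → M3 F) → Prop)
    (hPact : ∀ p A, sol A → P A → P (act c z p A))
    (hZ : ∀ p A, sol A → P A → ∀ i, (Dm (z p) : M3 F) * A i = A i * Dm (z p))
    (hfree : ∀ p A, sol A → P A → act c z p A = A → p = 1) :
    Nat.card (Fˣ × Fˣ) ∣ Nat.card {A : Fin (n + 2) → M3 F // sol A ∧ P A} := by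
  apply card_dvd_of_free_action
    (e := fun p x => ⟨act c z p x.1,
      ⟨⟨fun i => inU3_act c z p x.1 x.2.1.1 i, act_prod c z p x.1
          (hZ p x.1 x.2.1 x.2.2) x.2.1.2⟩, hPact p x.1 x.2.1 x.2.2⟩⟩)
  · intro x
    exact Subtype.ext (act_one c z x.1)
  · intro k k' x
    exact Subtype.ext (act_mul c z k k' x.1)
  · intro k x h
    exact hfree k x.1 x.2.1 x.2.2 (congrArg Subtype.val h)

def pb (A : Fin (n + 2) → M3 F) : Prop := ∀ i, A i 0 1 = 0
def pc (A : Fin (n + 2) → M3 F) : Prop := ∀ i, A i 0 2 = 0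
def pe (A : Fin (n + 2) → M3 F) : Prop := ∀ i, A i 1 2 = 0

lemma pb_act (c z : (Fˣ × Fˣ) →* (Fˣ × Fˣ)) (p : Fˣ × Fˣ) (A : Fin (n + 2) → M3 F) :
    pb (act c z p A) ↔ pb A :=
  forall_congr' fun i => act_entry_eq_zero_iff c z p A i 0 1

lemma pc_act (c z : (Fˣ × Fˣ) →* (Fˣ × Fˣ)) (p : Fˣ × Fˣ) (A : Fin (n + 2) → M3 F) :
    pc (act c z p A) ↔ pc A :=
  forall_congr' fun i => act_entry_eq_zero_iff c z p A i 0 2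

lemma pe_act (c z : (Fˣ × Fˣ) →* (Fˣ × Fˣ)) (p : Fˣ × Fˣ) (A : Fin (n + 2) → M3 F) :
    pe (act c z p A) ↔ pe A :=
  forall_congr' fun i => act_entry_eq_zero_iff c z p A i 1 2

lemma comm_helper (w : Fˣ × Fˣ) (M : M3 F) (hM : inU3 M)
    (h01 : M 0 1 = 0 ∨ vec3 w 0 = vec3 w 1)
    (h02 : M 0 2 = 0 ∨ vec3 w 0 = vec3 w 2)
    (h12 : M 1 2 = 0 ∨ vec3 w 1 = vec3 w 2) :
    (Dm w : M3 F) * M = M * Dm w := by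
  apply Dm_comm
  intro j k
  fin_cases j <;> fin_cases k
  · exact Or.inr rfl
  · exact h01
  · exact h02
  · exact Or.inl hM.2.2.2.1
  · exact Or.inr rfl
  · exact h12
  · exact Or.inl hM.2.2.2.2.1
  · exact Or.inl hM.2.2.2.2.2
  · exact Or.inr rfl

lemma vec3_fst (w : Fˣ × Fˣ) : vec3 w 0 = (w.1 : F) := rfl
lemma vec3_snd (w : Fˣ × Fˣ) : vec3 w 1 = (w.2 : F) := rfl

lemma zm_zero (z : (Fˣ × Fˣ) →* (Fˣ × Fˣ)) (p : Fˣ × Fˣ) :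
    zm z p (0 : Fin (n + 2)) = z p := by simp [zm]

lemma zm_idx_one (z : (Fˣ × Fˣ) →* (Fˣ × Fˣ)) (p : Fˣ × Fˣ) :
    zm z p (1 : Fin (n + 2)) = (z p)⁻¹ := by
  have h10 : (1 : Fin (n + 2)) ≠ 0 := by simp [Fin.ext_iff]
  simp [zm, h10]

lemma unit_cancel {α : F} (u : Fˣ) (hα : α ≠ 0) (h : (u : F) * α = α) : u = 1 := by
  have h1 : (u : F) * α = 1 * α := by rw [h, one_mul]
  exact Units.val_eq_one.mp (mul_right_cancel₀ hα h1)

/-- the diagonal piece -/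
lemma dvd_piece_diag [Finite F] :
    Nat.card (Fˣ × Fˣ) ∣
      Nat.card {A : Fin (n + 2) → M3 F // sol A ∧ (pb A ∧ pc A ∧ pe A)} := by
  apply piece_dvd (c := 1) (z := MonoidHom.id _)
  · intro p A hs hP
    exact ⟨(pb_act _ _ _ _).mpr hP.1, (pc_act _ _ _ _).mpr hP.2.1, (pe_act _ _ _ _).mpr hP.2.2⟩
  · intro p A hs hP i
    exact comm_helper _ _ (hs.1 i) (Or.inl (hP.1 i)) (Or.inl (hP.2.1 i)) (Or.inl (hP.2.2 i))
  · rintro ⟨s, u⟩ A hs hP hfix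
    have h00 := congrFun (congrFun (congrFun hfix 0) 0) 0
    have h11 := congrFun (congrFun (congrFun hfix 0) 1) 1
    rw [act_apply] at h00 h11
    simp only [MonoidHom.one_apply, MonoidHom.id_apply, one_mul, inv_one, vec3_one,
      zm_zero, mul_one, vec3_fst, vec3_snd, Prod.fst_one, Prod.snd_one, Units.val_one] at h00 h11
    rw [Prod.mk_eq_one]
    exact ⟨unit_cancel _ (hs.1 0).1 h00, unit_cancel _ (hs.1 0).2.1 h11⟩


lemma coeff_cancel {α : F} (U V : Fˣ) (hα : α ≠ 0) (h : (U : F) * α * (V : F) = α) :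
    U * V = 1 := by
  have h1 : ((U * V : Fˣ) : F) * α = 1 * α := by
    rw [Units.val_mul, one_mul]
    linear_combination h
  exact Units.val_eq_one.mp (mul_right_cancel₀ hα h1)

section fixlemmas
variable {c z : (Fˣ × Fˣ) →* (Fˣ × Fˣ)} {p : Fˣ × Fˣ} {A : Fin (n + 2) → M3 F}

lemma act_fix_entry (hfix : act c z p A = A) (i : Fin (n + 2)) (j k : Fin 3) :
    vec3 (c p * zm z p i) j * A i j k * vec3 (c p)⁻¹ k = A i j k := by
  rw [← act_apply]
  exact congrFun (congrFun (congrFun hfix i) j) k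

lemma fix_unit_00 (hfix : act c z p A = A) (i : Fin (n + 2)) (hα : A i 0 0 ≠ 0) :
    (c p * zm z p i).1 * ((c p)⁻¹).1 = 1 := by
  have h := act_fix_entry hfix i 0 0
  rw [vec3_fst, vec3_fst] at h
  exact coeff_cancel _ _ hα h

lemma fix_unit_11 (hfix : act c z p A = A) (i : Fin (n + 2)) (hα : A i 1 1 ≠ 0) :
    (c p * zm z p i).2 * ((c p)⁻¹).2 = 1 := by
  have h := act_fix_entry hfix i 1 1
  rw [vec3_snd, vec3_snd] at h
  exact coeff_cancel _ _ hα h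

lemma fix_unit_01 (hfix : act c z p A = A) (i : Fin (n + 2)) (hα : A i 0 1 ≠ 0) :
    (c p * zm z p i).1 * ((c p)⁻¹).2 = 1 := by
  have h := act_fix_entry hfix i 0 1
  rw [vec3_fst, vec3_snd] at h
  exact coeff_cancel _ _ hα h

lemma fix_unit_02 (hfix : act c z p A = A) (i : Fin (n + 2)) (hα : A i 0 2 ≠ 0) :
    (c p * zm z p i).1 = 1 := by
  have h := act_fix_entry hfix i 0 2
  rw [vec3_fst, vec3_two, mul_one] at h
  exact unit_cancel _ hα h

lemma fix_unit_12 (hfix : act c z p A = A) (i : Fin (n + 2)) (hα : A i 1 2 ≠ 0) :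
    (c p * zm z p i).2 = 1 := by
  have h := act_fix_entry hfix i 1 2
  rw [vec3_snd, vec3_two, mul_one] at h
  exact unit_cancel _ hα h

end fixlemmas

/-- `(s,u) ↦ (s,1)` -/
def hmS : (Fˣ × Fˣ) →* (Fˣ × Fˣ) := (MonoidHom.fst _ _).prod 1
/-- `(s,u) ↦ (1,u)` -/
def hmU : (Fˣ × Fˣ) →* (Fˣ × Fˣ) := (1 : (Fˣ × Fˣ) →* Fˣ).prod (MonoidHom.snd _ _)
/-- `(s,u) ↦ (u,u)` -/
def hmUU : (Fˣ × Fˣ) →* (Fˣ × Fˣ) := (MonoidHom.snd _ _).prod (MonoidHom.snd _ _)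

/-- the piece with only the `b`-entries possibly nonzero -/
lemma dvd_piece_b [Finite F] :
    Nat.card (Fˣ × Fˣ) ∣
      Nat.card {A : Fin (n + 2) → M3 F // sol A ∧ (¬pb A ∧ pc A ∧ pe A)} := by
  apply piece_dvd (c := hmS) (z := hmUU)
  · intro p A hs hP
    exact ⟨fun h => hP.1 ((pb_act _ _ _ _).mp h), (pc_act _ _ _ _).mpr hP.2.1,
      (pe_act _ _ _ _).mpr hP.2.2⟩
  · intro p A hs hP i
    refine comm_helper _ _ (hs.1 i) (Or.inr rfl) (Or.inl (hP.2.1 i)) (Or.inl (hP.2.2 i))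
  · rintro ⟨s, u⟩ A hs hP hfix
    have hu : u = 1 := by
      have h := fix_unit_00 hfix 0 (hs.1 0).1
      rw [zm_zero] at h
      simp only [hmS, hmUU, MonoidHom.prod_apply, MonoidHom.coe_fst, MonoidHom.coe_snd,
        MonoidHom.one_apply, Prod.fst_mul, Prod.fst_inv] at h
      rwa [mul_right_comm, mul_inv_cancel, one_mul] at h
    subst hu
    obtain ⟨i, hbi⟩ := not_forall.mp hP.1
    have hs1 : s = 1 := by
      have h := fix_unit_01 hfix i hbi
      have hz1 : zm hmUU (s, 1) i = 1 := zm_of_z_eq_one _ _ (by simp [hmUU]) i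
      rw [hz1] at h
      simpa [hmS, MonoidHom.prod_apply, MonoidHom.coe_fst, MonoidHom.one_apply,
        Prod.fst_mul, Prod.snd_inv, Prod.fst_inv] using h
    rw [Prod.mk_eq_one]
    exact ⟨hs1, rfl⟩

/-- the piece with only the `c`-entries possibly nonzero -/
lemma dvd_piece_c [Finite F] :
    Nat.card (Fˣ × Fˣ) ∣
      Nat.card {A : Fin (n + 2) → M3 F // sol A ∧ (pb A ∧ ¬pc A ∧ pe A)} := by
  apply piece_dvd (c := hmS) (z := hmU)
  · intro p A hs hP
    exact ⟨(pb_act _ _ _ _).mpr hP.1, fun h => hP.2.1 ((pc_act _ _ _ _).mp h),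
      (pe_act _ _ _ _).mpr hP.2.2⟩
  · intro p A hs hP i
    refine comm_helper _ _ (hs.1 i) (Or.inl (hP.1 i)) (Or.inr ?_) (Or.inl (hP.2.2 i))
    simp [vec3_fst, vec3_two, hmU]
  · rintro ⟨s, u⟩ A hs hP hfix
    have hu : u = 1 := by
      have h := fix_unit_11 hfix 0 (hs.1 0).2.1
      rw [zm_zero] at h
      simpa [hmS, hmU, MonoidHom.prod_apply, MonoidHom.coe_snd, MonoidHom.one_apply,
        Prod.snd_mul, Prod.snd_inv] using h
    subst hu
    obtain ⟨i, hci⟩ := not_forall.mp hP.2.1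
    have hs1 : s = 1 := by
      have h := fix_unit_02 hfix i hci
      have hz1 : zm hmU (s, 1) i = 1 := zm_of_z_eq_one _ _ (by simp [hmU]) i
      rw [hz1] at h
      simpa [hmS, MonoidHom.prod_apply, MonoidHom.coe_fst, Prod.fst_mul] using h
    rw [Prod.mk_eq_one]
    exact ⟨hs1, rfl⟩

/-- the piece with only the `e`-entries possibly nonzero -/
lemma dvd_piece_e [Finite F] :
    Nat.card (Fˣ × Fˣ) ∣
      Nat.card {A : Fin (n + 2) → M3 F // sol A ∧ (pb A ∧ pc A ∧ ¬pe A)} := by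
  apply piece_dvd (c := hmU) (z := hmS)
  · intro p A hs hP
    exact ⟨(pb_act _ _ _ _).mpr hP.1, (pc_act _ _ _ _).mpr hP.2.1,
      fun h => hP.2.2 ((pe_act _ _ _ _).mp h)⟩
  · intro p A hs hP i
    refine comm_helper _ _ (hs.1 i) (Or.inl (hP.1 i)) (Or.inl (hP.2.1 i)) (Or.inr ?_)
    simp [vec3_snd, vec3_two, hmS]
  · rintro ⟨s, u⟩ A hs hP hfix
    have hsu : s = 1 := by
      have h := fix_unit_00 hfix 0 (hs.1 0).1
      rw [zm_zero] at h
      simpa [hmS, hmU, MonoidHom.prod_apply, MonoidHom.coe_fst, MonoidHom.one_apply,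
        Prod.fst_mul, Prod.fst_inv] using h
    subst hsu
    obtain ⟨i, hei⟩ := not_forall.mp hP.2.2
    have hu1 : u = 1 := by
      have h := fix_unit_12 hfix i hei
      have hz1 : zm hmS (1, u) i = 1 := zm_of_z_eq_one _ _ (by simp [hmS]) i
      rw [hz1] at h
      simpa [hmU, MonoidHom.prod_apply, MonoidHom.coe_snd, Prod.snd_mul] using h
    rw [Prod.mk_eq_one]
    exact ⟨rfl, hu1⟩

/-- the conjugation pieces: at least two of the off-diagonal entry classes nonvanishing -/
lemma dvd_piece_conj [Finite F] (P : (Fin (n + 2) → M3 F) → Prop)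
    (hinv : ∀ (c z : (Fˣ × Fˣ) →* (Fˣ × Fˣ)) p A, P A → P (act c z p A))
    (h2 : ∀ A, P A → ((¬pb A ∧ ¬pc A) ∨ (¬pb A ∧ ¬pe A) ∨ (¬pc A ∧ ¬pe A))) :
    Nat.card (Fˣ × Fˣ) ∣
      Nat.card {A : Fin (n + 2) → M3 F // sol A ∧ P A} := by
  apply piece_dvd (c := MonoidHom.id _) (z := 1)
  · intro p A hs hP
    exact hinv _ _ p A hP
  · intro p A hs hP i
    refine comm_helper _ _ (hs.1 i) (Or.inr ?_) (Or.inr ?_) (Or.inr ?_) <;>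
      simp [vec3_fst, vec3_snd, vec3_two, MonoidHom.one_apply]
  · rintro ⟨s, u⟩ A hs hP hfix
    have hz1 : ∀ i : Fin (n + 2), zm (1 : (Fˣ × Fˣ) →* (Fˣ × Fˣ)) (s, u) i = 1 :=
      fun i => zm_of_z_eq_one _ _ rfl i
    have hb' : ¬pb A → s * u⁻¹ = 1 := by
      intro h
      obtain ⟨i, hbi⟩ := not_forall.mp h
      have hh := fix_unit_01 hfix i hbi
      rw [hz1 i] at hh
      simpa [MonoidHom.id_apply, Prod.snd_inv] using hh
    have hc' : ¬pc A → s = 1 := by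
      intro h
      obtain ⟨i, hci⟩ := not_forall.mp h
      have hh := fix_unit_02 hfix i hci
      rw [hz1 i] at hh
      simpa [MonoidHom.id_apply] using hh
    have he' : ¬pe A → u = 1 := by
      intro h
      obtain ⟨i, hei⟩ := not_forall.mp h
      have hh := fix_unit_12 hfix i hei
      rw [hz1 i] at hh
      simpa [MonoidHom.id_apply] using hh
    rw [Prod.mk_eq_one]
    rcases h2 A hP with ⟨h1, h2'⟩ | ⟨h1, h2'⟩ | ⟨h1, h2'⟩
    · have hsu := hb' h1
      have hs1 := hc' h2'
      subst hs1
      exact ⟨rfl, by rwa [one_mul, inv_eq_one] at hsu⟩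
    · have hsu := hb' h1
      have hu1 := he' h2'
      subst hu1
      rw [inv_one, mul_one] at hsu
      exact ⟨hsu, rfl⟩
    · exact ⟨hc' h1, he' h2'⟩

end U3aux

open U3aux in
theorem stmt_6 {F : Type*} [Field F] [Fintype F] (q : ℕ) (hq : Fintype.card F = q)
    (hodd : Odd q) (r : ℕ) (hr : 2 ≤ r) :
    (q - 1) ^ 2 ∣
      Nat.card {A : Fin r → M3 F //
        (∀ i, inU3 (A i)) ∧ (List.ofFn (fun i => (A i) ^ 2)).prod = 1} := by
  classical
  obtain ⟨n, rfl⟩ : ∃ n, r = n + 2 := ⟨r - 2, by omega⟩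
  have hcard : Nat.card (Fˣ × Fˣ) = (q - 1) ^ 2 := by
    rw [Nat.card_prod, Nat.card_eq_fintype_card, Fintype.card_units, hq, sq]
  set X := {A : Fin (n + 2) → M3 F // sol A} with hX
  let f : X → Bool × Bool × Bool :=
    fun x => (decide (pb x.1), decide (pc x.1), decide (pe x.1))
  have hsum : Nat.card X = ∑ v : Bool × Bool × Bool, Nat.card {x : X // f x = v} := by
    rw [Nat.card_congr (Equiv.sigmaFiberEquiv f).symm, nat_card_sigma']
  have key : ∀ v : Bool × Bool × Bool, (q - 1) ^ 2 ∣ Nat.card {x : X // f x = v} := by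
    rintro ⟨vb, vc, ve⟩
    have conv : ∀ (P : (Fin (n + 2) → M3 F) → Prop),
        (∀ A : Fin (n + 2) → M3 F,
          (((decide (pb A), decide (pc A), decide (pe A)) : Bool × Bool × Bool)
            = (vb, vc, ve) ↔ P A)) →
        Nat.card {x : X // f x = (vb, vc, ve)}
          = Nat.card {A : Fin (n + 2) → M3 F // sol A ∧ P A} := by
      intro P hiff
      exact Nat.card_congr ((Equiv.subtypeSubtypeEquivSubtypeInter sol _).trans
        (Equiv.subtypeEquivRight fun A => and_congr_right fun _ => hiff A))
    cases vb <;> cases vc <;> cases ve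
    · rw [conv (fun A => ¬pb A ∧ ¬pc A ∧ ¬pe A)
        (fun A => by simp [Prod.ext_iff]), ← hcard]
      exact dvd_piece_conj _
        (fun c z p A hP => ⟨fun h => hP.1 ((pb_act c z p A).mp h),
          fun h => hP.2.1 ((pc_act c z p A).mp h), fun h => hP.2.2 ((pe_act c z p A).mp h)⟩)
        (fun A hP => Or.inl ⟨hP.1, hP.2.1⟩)
    · rw [conv (fun A => ¬pb A ∧ ¬pc A ∧ pe A)
        (fun A => by simp [Prod.ext_iff]), ← hcard]
      exact dvd_piece_conj _
        (fun c z p A hP => ⟨fun h => hP.1 ((pb_act c z p A).mp h),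
          fun h => hP.2.1 ((pc_act c z p A).mp h), (pe_act c z p A).mpr hP.2.2⟩)
        (fun A hP => Or.inl ⟨hP.1, hP.2.1⟩)
    · rw [conv (fun A => ¬pb A ∧ pc A ∧ ¬pe A)
        (fun A => by simp [Prod.ext_iff]), ← hcard]
      exact dvd_piece_conj _
        (fun c z p A hP => ⟨fun h => hP.1 ((pb_act c z p A).mp h),
          (pc_act c z p A).mpr hP.2.1, fun h => hP.2.2 ((pe_act c z p A).mp h)⟩)
        (fun A hP => Or.inr (Or.inl ⟨hP.1, hP.2.2⟩))
    · rw [conv (fun A => ¬pb A ∧ pc A ∧ pe A)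
        (fun A => by simp [Prod.ext_iff]), ← hcard]
      exact dvd_piece_b
    · rw [conv (fun A => pb A ∧ ¬pc A ∧ ¬pe A)
        (fun A => by simp [Prod.ext_iff]), ← hcard]
      exact dvd_piece_conj _
        (fun c z p A hP => ⟨(pb_act c z p A).mpr hP.1,
          fun h => hP.2.1 ((pc_act c z p A).mp h), fun h => hP.2.2 ((pe_act c z p A).mp h)⟩)
        (fun A hP => Or.inr (Or.inr ⟨hP.2.1, hP.2.2⟩))
    · rw [conv (fun A => pb A ∧ ¬pc A ∧ pe A)
        (fun A => by simp [Prod.ext_iff]), ← hcard]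
      exact dvd_piece_c
    · rw [conv (fun A => pb A ∧ pc A ∧ ¬pe A)
        (fun A => by simp [Prod.ext_iff]), ← hcard]
      exact dvd_piece_e
    · rw [conv (fun A => pb A ∧ pc A ∧ pe A)
        (fun A => by simp [Prod.ext_iff]), ← hcard]
      exact dvd_piece_diag
  calc (q - 1) ^ 2 ∣ ∑ v : Bool × Bool × Bool, Nat.card {x : X // f x = v} :=
        Finset.dvd_sum fun v _ => key v
    _ = Nat.card X := hsum.symm
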